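/- Define F(t,r) = (1 + r cos t)/(r² + 4r cos t + 4)^{3/2} + (1 − r cos t)/(r² − 4r cos t + 4)^{3/2}. For every r with 1 < r ≤ (√17 − 3)^{1/2}, the function t ↦ F(t,r) is nondecreasing on the interval [0, arccos(1/r)] (on which r cos t ≥ 1), i.e. ∂F/∂t(t,r) ≥ 0 for t ∈ [0, arccos(1/r)]. -/
import Mathlib


/-- The coefficient of the linearization of the curved Sitnikov problem (with
circular primaries, `ε = 0`, `R = 1`) at the equilibrium `q = π`. -/
noncomputable def F (t r : ℝ) : ℝ :=
  (1 + r * Real.cos t) / (r ^ 2 + 4 * r * Real.cos t + 4) ^ ((3 : ℝ) / 2) +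
    (1 - r * Real.cos t) / (r ^ 2 - 4 * r * Real.cos t + 4) ^ ((3 : ℝ) / 2)

/-- `F t r` viewed as a function of `c = cos t`. -/
noncomputable def G (r c : ℝ) : ℝ :=
  (1 + r * c) / (r ^ 2 + 4 * r * c + 4) ^ ((3 : ℝ) / 2) +
    (1 - r * c) / (r ^ 2 - 4 * r * c + 4) ^ ((3 : ℝ) / 2)

lemma hasDerivAt_term (A k c : ℝ) (hA : 0 < A + 4 * k * c) :
    HasDerivAt (fun x => (1 + k * x) / (A + 4 * k * x) ^ ((3 : ℝ) / 2))
      ((k * (A + 4 * k * c) ^ ((3 : ℝ) / 2) -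
        (1 + k * c) * (4 * k * ((3 : ℝ) / 2) * (A + 4 * k * c) ^ ((3 : ℝ) / 2 - 1))) /
        ((A + 4 * k * c) ^ ((3 : ℝ) / 2)) ^ 2) c := by
  have hP : HasDerivAt (fun x : ℝ => A + 4 * k * x) (4 * k) c := by
    simpa using ((hasDerivAt_id c).const_mul (4 * k)).const_add A
  have hpow := hP.rpow_const (p := (3 : ℝ) / 2) (Or.inl hA.ne')
  have hnum : HasDerivAt (fun x : ℝ => 1 + k * x) k c := by
    simpa using ((hasDerivAt_id c).const_mul k).const_add 1
  exact hnum.div hpow (Real.rpow_pos_of_pos hA _).ne'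

/-- the sign lemma: the derivative expression is nonpositive when `k * (P - 6(1+kc)) ≤ 0`. -/
lemma term_deriv_nonpos (A k c : ℝ) (hA : 0 < A + 4 * k * c)
    (hsign : k * ((A + 4 * k * c) - 6 * (1 + k * c)) ≤ 0) :
    (k * (A + 4 * k * c) ^ ((3 : ℝ) / 2) -
        (1 + k * c) * (4 * k * ((3 : ℝ) / 2) * (A + 4 * k * c) ^ ((3 : ℝ) / 2 - 1))) /
        ((A + 4 * k * c) ^ ((3 : ℝ) / 2)) ^ 2 ≤ 0 := by
  set P := A + 4 * k * c with hPdef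
  have hs : (0:ℝ) ≤ P ^ ((1 : ℝ) / 2) := Real.rpow_nonneg hA.le _
  have h32 : P ^ ((3 : ℝ) / 2) = P * P ^ ((1 : ℝ) / 2) := by
    rw [show (3:ℝ)/2 = 1 + 1/2 by norm_num, Real.rpow_add hA, Real.rpow_one]
  have h12 : P ^ ((3 : ℝ) / 2 - 1) = P ^ ((1 : ℝ) / 2) := by norm_num
  apply div_nonpos_of_nonpos_of_nonneg _ (sq_nonneg _)
  rw [h32, h12]
  have : k * (P * P ^ ((1:ℝ)/2)) - (1 + k * c) * (4 * k * ((3:ℝ)/2) * P ^ ((1:ℝ)/2))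
      = P ^ ((1:ℝ)/2) * (k * (P - 6 * (1 + k * c))) := by ring
  rw [this]
  exact mul_nonpos_of_nonneg_of_nonpos hs hsign

lemma antitoneG (r : ℝ) (h1 : 1 < r) (h2 : r < 2) :
    AntitoneOn (G r) (Set.Icc (1 / r) 1) := by
  have hr0 : (0:ℝ) < r := lt_trans one_pos h1
  -- key facts on the interval
  have hrc : ∀ c ∈ Set.Icc (1/r) 1, 1 ≤ r * c ∧ r * c ≤ r := by
    intro c hc
    constructor
    · rw [show (1:ℝ) = r * (1/r) by field_simp]
      exact mul_le_mul_of_nonneg_left hc.1 hr0.le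
    · nlinarith [hc.2]
  have hPpos : ∀ c ∈ Set.Icc (1/r) 1, 0 < (r^2 + 4) + 4 * r * c :=
    fun c hc => by nlinarith [(hrc c hc).1]
  have hQpos : ∀ c ∈ Set.Icc (1/r) 1, 0 < (r^2 + 4) + 4 * (-r) * c :=
    fun c hc => by nlinarith [(hrc c hc).2, sq_nonneg (r - 2)]
  -- G r agrees with a sum of two generic terms
  have hGeq : G r = (fun c => (1 + r * c) / ((r^2+4) + 4 * r * c) ^ ((3:ℝ)/2)
      + (1 + (-r) * c) / ((r^2+4) + 4 * (-r) * c) ^ ((3:ℝ)/2)) := by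
    funext c
    unfold G
    ring_nf
  rw [hGeq]
  have hderiv : ∀ c ∈ Set.Icc (1/r) 1, HasDerivAt (fun c => (1 + r * c) / ((r^2+4) + 4 * r * c) ^ ((3:ℝ)/2)
      + (1 + (-r) * c) / ((r^2+4) + 4 * (-r) * c) ^ ((3:ℝ)/2))
      (((r * ((r^2+4) + 4 * r * c) ^ ((3 : ℝ) / 2) -
        (1 + r * c) * (4 * r * ((3 : ℝ) / 2) * ((r^2+4) + 4 * r * c) ^ ((3 : ℝ) / 2 - 1))) /
        (((r^2+4) + 4 * r * c) ^ ((3 : ℝ) / 2)) ^ 2) +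
       (((-r) * ((r^2+4) + 4 * (-r) * c) ^ ((3 : ℝ) / 2) -
        (1 + (-r) * c) * (4 * (-r) * ((3 : ℝ) / 2) * ((r^2+4) + 4 * (-r) * c) ^ ((3 : ℝ) / 2 - 1))) /
        (((r^2+4) + 4 * (-r) * c) ^ ((3 : ℝ) / 2)) ^ 2)) c :=
    fun c hc => (hasDerivAt_term (r^2+4) r c (hPpos c hc)).add
      (hasDerivAt_term (r^2+4) (-r) c (hQpos c hc))
  apply antitoneOn_of_deriv_nonpos (convex_Icc _ _)
  · intro c hc
    exact ((hderiv c hc).differentiableAt).continuousAt.continuousWithinAt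
  · intro c hc
    rw [interior_Icc] at hc
    exact ((hderiv c (Set.mem_Icc_of_Ioo hc)).differentiableAt).differentiableWithinAt
  · intro c hc
    rw [interior_Icc] at hc
    have hc' := Set.mem_Icc_of_Ioo hc
    rw [(hderiv c hc').deriv]
    have hd1 := term_deriv_nonpos (r^2+4) r c (hPpos c hc')
      (by nlinarith [(hrc c hc').1])
    have hd2 := term_deriv_nonpos (r^2+4) (-r) c (hQpos c hc')
      (by nlinarith [(hrc c hc').1])
    linarith

/-- for `1 < r ≤ (√17 - 3)^{1/2}`, the function `t ↦ F(t,r)` is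
nondecreasing on `[0, arccos(1/r)]`. -/
theorem F_monotone_on_initial_interval (r : ℝ) (h1 : 1 < r)
    (h2 : r ≤ Real.sqrt (Real.sqrt 17 - 3)) :
    MonotoneOn (fun t => F t r) (Set.Icc 0 (Real.arccos (1 / r))) := by
  have hr0 : (0:ℝ) < r := lt_trans one_pos h1
  have h17 : Real.sqrt 17 < 5 := by
    nlinarith [Real.sq_sqrt (show (0:ℝ) ≤ 17 by norm_num), Real.sqrt_nonneg 17]
  have hr2 : r < 2 := by
    have h3 : Real.sqrt (Real.sqrt 17 - 3) < 2 := by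
      nlinarith [Real.sq_sqrt (show (0:ℝ) ≤ Real.sqrt 17 - 3 from by
        nlinarith [Real.sq_sqrt (show (0:ℝ) ≤ 17 by norm_num), Real.sqrt_nonneg 17]),
        Real.sqrt_nonneg (Real.sqrt 17 - 3)]
    linarith
  have hinv0 : (0:ℝ) ≤ 1 / r := by positivity
  have hinv1 : 1 / r ≤ 1 := by
    rw [div_le_one hr0]; linarith
  have hinvm1 : (-1:ℝ) ≤ 1 / r := by linarith
  have hG := antitoneG r h1 hr2
  have hcosA : AntitoneOn Real.cos (Set.Icc 0 Real.pi) :=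
    Real.strictAntiOn_cos.antitoneOn
  have hsub : Set.Icc (0:ℝ) (Real.arccos (1/r)) ⊆ Set.Icc 0 Real.pi :=
    Set.Icc_subset_Icc le_rfl (Real.arccos_le_pi _)
  have hmaps : ∀ t ∈ Set.Icc (0:ℝ) (Real.arccos (1/r)), Real.cos t ∈ Set.Icc (1/r) 1 := by
    intro t ht
    constructor
    · rw [← Real.cos_arccos hinvm1 hinv1]
      exact hcosA (hsub ht) ⟨Real.arccos_nonneg _, Real.arccos_le_pi _⟩ ht.2
    · exact Real.cos_le_one t
  intro t1 ht1 t2 ht2 hle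
  have hc : Real.cos t2 ≤ Real.cos t1 := hcosA (hsub ht1) (hsub ht2) hle
  have : G r (Real.cos t1) ≤ G r (Real.cos t2) :=
    hG (hmaps t2 ht2) (hmaps t1 ht1) hc
  simpa [F, G] using this
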